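/- A compare-and-swap object over a domain with two distinct values v₀ ≠ v₁, initialized to v₀, is doubly-perturbing, witnessed by CAS_p(v₀,v₁): it is perturbing with respect to CAS_q(v₀,v₁) after the empty history, and after extending CAS_p(v₀,v₁) ∘ CAS_q(v₀,v₁) by CAS_q(v₁,v₀), a second CAS_p(v₀,v₁) is again perturbing with respect to CAS_q(v₀,v₁). -/
import Mathlib

/-- A compare-and-swap operation with arguments `old` and `new`. -/
inductive CASOp (V : Type) : Type
  | cas (old new : V)

def casStep {V : Type} [DecidableEq V] : CASOp V → V → V
  | .cas old new, s => if s = old then new else s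

def casResp {V : Type} [DecidableEq V] : CASOp V → V → Bool
  | .cas old _, s => decide (s = old)

def casRun {V : Type} [DecidableEq V] (init : V) (H : List (CASOp V)) : V :=
  H.foldl (fun s op => casStep op s) init

def casPerturbing {V : Type} [DecidableEq V] (init : V) (opp opq : CASOp V)
    (H : List (CASOp V)) : Prop :=
  casResp opq (casRun init (H ++ [opp])) ≠ casResp opq (casRun init H)

/-- A CAS object with two distinct values, initialized to `v₀`, is
doubly-perturbing, witnessed by `CAS_p(v₀,v₁)`: it is perturbing w.r.t.
`CAS_q(v₀,v₁)` after the empty history, and again after the history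
`CAS_p(v₀,v₁) ∘ CAS_q(v₀,v₁) ∘ CAS_q(v₁,v₀)`. -/
theorem stmt4 {V : Type} [DecidableEq V] (v0 v1 : V) (h : v0 ≠ v1) :
    casPerturbing v0 (CASOp.cas v0 v1) (CASOp.cas v0 v1) [] ∧
    casPerturbing v0 (CASOp.cas v0 v1) (CASOp.cas v0 v1)
      [CASOp.cas v0 v1, CASOp.cas v0 v1, CASOp.cas v1 v0] := by
  simp [casPerturbing, casRun, casStep, casResp, h, h.symm]
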